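/- Let X1,...,Xn be i.i.d. uniform in [0,1]^{d_n}. If d_n − (2/log 2) log n → ∞, then the number of non-Pareto points n − K_{n,d_n} converges to 0 in probability; in fact E(n − K_{n,d_n}) ≤ n(n−1) 2^{−d_n} → 0. -/

import Mathlib

open MeasureTheory ProbabilityTheory Filter Real Finset
open scoped ENNReal

/-- Uniform distribution on the unit cube `[0,1]^d`. -/
noncomputable def cube (d : ℕ) : Measure (Fin d → ℝ) :=
  Measure.pi fun _ => volume.restrict (Set.Icc 0 1)

/-- Joint law of `n` i.i.d. points uniform in `[0,1]^d`. -/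
noncomputable def sample (n d : ℕ) : Measure (Fin n → Fin d → ℝ) :=
  Measure.pi fun _ => cube d

/-- `x` dominates `y` coordinatewise. -/
def dominates {d : ℕ} (x y : Fin d → ℝ) : Prop := ∀ k, y k ≤ x k

open scoped Classical in
/-- Number of points `X_i` dominates among the others. -/
noncomputable def domCount (n d : ℕ) (ω : Fin n → Fin d → ℝ) (i : Fin n) : ℕ :=
  (Finset.univ.filter fun j => j ≠ i ∧ dominates (ω i) (ω j)).card

open scoped Classical in
/-- Number of non-Pareto points (points dominating at least one other point). -/
noncomputable def nonParetoCount (n d : ℕ) (ω : Fin n → Fin d → ℝ) : ℕ :=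
  (Finset.univ.filter fun i => 1 ≤ domCount n d ω i).card

open scoped Classical in
/-- Number of points dominating exactly `r` other points. -/
noncomputable def layerCount (r n d : ℕ) (ω : Fin n → Fin d → ℝ) : ℕ :=
  (Finset.univ.filter fun i => domCount n d ω i = r).card

noncomputable abbrev mu1 : Measure ℝ := volume.restrict (Set.Icc 0 1)

instance : IsProbabilityMeasure mu1 :=
  ⟨by simp [Real.volume_Icc]⟩

instance (d : ℕ) : IsProbabilityMeasure (cube d) := by
  unfold cube; infer_instance

instance (n d : ℕ) : IsProbabilityMeasure (sample n d) := by
  unfold sample; infer_instance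

lemma meas_pair {n d : ℕ} (i j : Fin n) :
    Measurable (fun ω : Fin n → Fin d → ℝ => (ω i, ω j)) :=
  (measurable_pi_apply i).prodMk (measurable_pi_apply j)

lemma measSet_dom {d : ℕ} :
    MeasurableSet {p : (Fin d → ℝ) × (Fin d → ℝ) | dominates p.1 p.2} := by
  have : {p : (Fin d → ℝ) × (Fin d → ℝ) | dominates p.1 p.2}
      = ⋂ k, {p : (Fin d → ℝ) × (Fin d → ℝ) | p.2 k ≤ p.1 k} := by
    ext p; simp [dominates, Set.mem_iInter]
  rw [this]
  exact MeasurableSet.iInter fun k =>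
    measurableSet_le (measurable_snd.eval) (measurable_fst.eval)

lemma measSet_A {n d : ℕ} (i j : Fin n) :
    MeasurableSet {ω : Fin n → Fin d → ℝ | dominates (ω i) (ω j)} :=
  (meas_pair i j) (measSet_dom)

lemma map_pair {n d : ℕ} (i j : Fin n) (hij : j ≠ i) :
    Measure.map (fun ω : Fin n → Fin d → ℝ => (ω i, ω j)) (sample n d)
      = (cube d).prod (cube d) := by
  classical
  refine Eq.symm (Measure.prod_eq (μ := cube d) (ν := cube d) fun s t hs ht => ?_)
  rw [Measure.map_apply (meas_pair i j) (hs.prod ht)]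
  have hpre : (fun ω : Fin n → Fin d → ℝ => (ω i, ω j)) ⁻¹' (s ×ˢ t)
      = Set.pi Set.univ (fun i' => if i' = i then s else if i' = j then t else Set.univ) := by
    ext ω
    simp only [Set.mem_preimage, Set.mem_prod, Set.mem_pi, Set.mem_univ, forall_true_left]
    constructor
    · rintro ⟨h1, h2⟩ i'
      by_cases h : i' = i
      · subst h; simpa using h1
      · by_cases h' : i' = j
        · subst h'; simp [h, h2]
        · simp [h, h']
    · intro h
      constructor
      · have := h i; simpa using this
      · have := h j; simpa [hij] using this
  rw [hpre]
  unfold sample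
  rw [Measure.pi_pi]
  have hji : j ∈ (Finset.univ.erase i) := Finset.mem_erase.2 ⟨hij, Finset.mem_univ j⟩
  rw [← Finset.mul_prod_erase Finset.univ _ (Finset.mem_univ i),
    ← Finset.mul_prod_erase _ _ hji]
  have h1 : ∀ i' ∈ (Finset.univ.erase i).erase j,
      cube d (if i' = i then s else if i' = j then t else Set.univ) = 1 := by
    intro i' hi'
    have h2 := Finset.mem_erase.1 hi'
    have h3 := Finset.mem_erase.1 h2.2
    simp [h2.1, h3.1]
  rw [Finset.prod_eq_one h1]
  simp [hij]

lemma half_pair : (mu1.prod mu1) {q : ℝ × ℝ | q.2 ≤ q.1} = ENNReal.ofReal (1/2) := by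
  rw [Measure.prod_apply (measurableSet_le measurable_snd measurable_fst)]
  have h1 : ∀ x : ℝ, (Prod.mk x ⁻¹' {q : ℝ × ℝ | q.2 ≤ q.1}) = Set.Iic x := by
    intro x; ext y; simp
  simp_rw [h1]
  have h2 : ∫⁻ x, mu1 (Set.Iic x) ∂mu1 = ∫⁻ x in Set.Icc (0:ℝ) 1, ENNReal.ofReal x ∂volume := by
    apply setLIntegral_congr_fun measurableSet_Icc
    intro x hx
    dsimp only
    have : Set.Iic x ∩ Set.Icc (0:ℝ) 1 = Set.Icc 0 x := by
      ext y
      constructor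
      · rintro ⟨hy1, hy2, _⟩; exact ⟨hy2, hy1⟩
      · rintro ⟨hy1, hy2⟩; exact ⟨hy2, hy1, hy2.trans hx.2⟩
    rw [Measure.restrict_apply measurableSet_Iic, this, Real.volume_Icc, sub_zero]
  rw [h2, ← ofReal_integral_eq_lintegral_ofReal]
  · congr 1
    rw [MeasureTheory.integral_Icc_eq_integral_Ioc,
      ← intervalIntegral.integral_of_le (zero_le_one (α := ℝ)), integral_id]
    norm_num
  · exact continuous_id.integrableOn_Icc
  · exact ae_restrict_of_forall_mem measurableSet_Icc fun x hx => hx.1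

lemma prob_pair {n d : ℕ} (i j : Fin n) (hij : j ≠ i) :
    sample n d {ω | dominates (ω i) (ω j)} = ENNReal.ofReal (1/2) ^ d := by
  have hset : {ω : Fin n → Fin d → ℝ | dominates (ω i) (ω j)}
      = (fun ω : Fin n → Fin d → ℝ => (ω i, ω j)) ⁻¹' {p | dominates p.1 p.2} := rfl
  rw [hset, ← Measure.map_apply (meas_pair i j) measSet_dom, map_pair i j hij]
  have hmp := (measurePreserving_arrowProdEquivProdArrow ℝ ℝ (Fin d)
    (fun _ => mu1) (fun _ => mu1)).map_eq
  rw [show (cube d).prod (cube d) = Measure.map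
      (MeasurableEquiv.arrowProdEquivProdArrow ℝ ℝ (Fin d))
      (Measure.pi fun _ => mu1.prod mu1) from hmp.symm]
  rw [Measure.map_apply (MeasurableEquiv.measurable _) measSet_dom]
  have hpre : (MeasurableEquiv.arrowProdEquivProdArrow ℝ ℝ (Fin d)) ⁻¹' {p | dominates p.1 p.2}
      = Set.pi Set.univ (fun _ : Fin d => {q : ℝ × ℝ | q.2 ≤ q.1}) := by
    ext u
    simp [MeasurableEquiv.arrowProdEquivProdArrow, Equiv.arrowProdEquivProdArrow,
      dominates, Set.mem_pi]
  rw [hpre, Measure.pi_pi]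
  simp [half_pair]

open scoped Classical

def Bset (n d : ℕ) (i : Fin n) : Set (Fin n → Fin d → ℝ) :=
  {ω | ∃ j, j ≠ i ∧ dominates (ω i) (ω j)}

def Cset (n d : ℕ) (i j : Fin n) : Set (Fin n → Fin d → ℝ) :=
  {ω | j ≠ i ∧ dominates (ω i) (ω j)}

lemma measCset {n d : ℕ} (i j : Fin n) : MeasurableSet (Cset n d i j) := by
  by_cases h : j = i
  · have : Cset n d i j = ∅ := by ext ω; simp [Cset, h]
    rw [this]; exact MeasurableSet.empty
  · have : Cset n d i j = {ω | dominates (ω i) (ω j)} := by ext ω; simp [Cset, h]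
    rw [this]; exact measSet_A i j

lemma probCset {n d : ℕ} (i j : Fin n) :
    sample n d (Cset n d i j) = if j = i then 0 else ENNReal.ofReal (1/2) ^ d := by
  by_cases h : j = i
  · have h0 : Cset n d i j = ∅ := by ext ω; simp [Cset, h]
    rw [h0, if_pos h]; simp
  · have : Cset n d i j = {ω | dominates (ω i) (ω j)} := by ext ω; simp [Cset, h]
    rw [this, prob_pair i j h]
    simp [h]

lemma measBset {n d : ℕ} (i : Fin n) : MeasurableSet (Bset n d i) := by
  have : Bset n d i = ⋃ j, Cset n d i j := by ext ω; simp [Bset, Cset]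
  rw [this]
  exact MeasurableSet.iUnion fun j => measCset i j

lemma mem_Bset_iff {n d : ℕ} (ω : Fin n → Fin d → ℝ) (i : Fin n) :
    ω ∈ Bset n d i ↔ 1 ≤ domCount n d ω i := by
  rw [domCount]
  rw [Nat.one_le_iff_ne_zero, ← Nat.pos_iff_ne_zero, Finset.card_pos,
    Finset.filter_nonempty_iff]
  simp [Bset]

lemma nonPareto_repr {n d : ℕ} (ω : Fin n → Fin d → ℝ) :
    nonParetoCount n d ω = ∑ i, Set.indicator (Bset n d i) (fun _ => 1) ω := by
  rw [nonParetoCount, Finset.card_filter]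
  refine Finset.sum_congr rfl fun i _ => ?_
  by_cases h : 1 ≤ domCount n d ω i <;>
    simp [Set.indicator_apply, mem_Bset_iff, h]

lemma meas_count {n d : ℕ} : Measurable (fun ω => nonParetoCount n d ω) := by
  have : (fun ω => nonParetoCount n d ω)
      = fun ω => ∑ i, Set.indicator (Bset n d i) (fun _ => 1) ω :=
    funext fun ω => nonPareto_repr ω
  rw [this]
  exact Finset.measurable_sum _ fun i _ => measurable_const.indicator (measBset i)

lemma lintegral_bound (n d : ℕ) :
    ∫⁻ ω, (nonParetoCount n d ω : ℝ≥0∞) ∂ sample n d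
      ≤ (n * (n - 1) : ℕ) * ENNReal.ofReal (1/2) ^ d := by
  have hle : ∀ ω, (nonParetoCount n d ω : ℝ≥0∞)
      ≤ ∑ i, ∑ j, Set.indicator (Cset n d i j) (fun _ => (1:ℝ≥0∞)) ω := by
    intro ω
    have h1 : nonParetoCount n d ω ≤ ∑ i, domCount n d ω i := by
      rw [nonParetoCount, Finset.card_filter]
      refine Finset.sum_le_sum fun i _ => ?_
      by_cases h : 1 ≤ domCount n d ω i <;> simp [h]
    calc (nonParetoCount n d ω : ℝ≥0∞) ≤ ((∑ i, domCount n d ω i : ℕ) : ℝ≥0∞) := by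
          exact_mod_cast h1
      _ = ∑ i, ∑ j, Set.indicator (Cset n d i j) (fun _ => (1:ℝ≥0∞)) ω := by
          rw [Nat.cast_sum]
          refine Finset.sum_congr rfl fun i _ => ?_
          rw [domCount, Finset.card_filter, Nat.cast_sum]
          refine Finset.sum_congr rfl fun j _ => ?_
          by_cases h : j ≠ i ∧ dominates (ω i) (ω j) <;>
            simp [Set.indicator_apply, Cset, h]
  calc ∫⁻ ω, (nonParetoCount n d ω : ℝ≥0∞) ∂ sample n d
      ≤ ∫⁻ ω, ∑ i, ∑ j, Set.indicator (Cset n d i j) (fun _ => (1:ℝ≥0∞)) ω ∂ sample n d :=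
        lintegral_mono hle
    _ = ∑ i, ∑ j, sample n d (Cset n d i j) := by
        rw [lintegral_finset_sum]
        · refine Finset.sum_congr rfl fun i _ => ?_
          rw [lintegral_finset_sum]
          · exact Finset.sum_congr rfl fun j _ => lintegral_indicator_one (measCset i j)
          · exact fun j _ => measurable_const.indicator (measCset i j)
        · exact fun i _ => Finset.measurable_sum _ fun j _ =>
            measurable_const.indicator (measCset i j)
    _ ≤ (n * (n - 1) : ℕ) * ENNReal.ofReal (1/2) ^ d := by
        simp_rw [probCset]
        refine le_of_eq ?_
        have hinner : ∀ i : Fin n, (∑ j : Fin n, if j = i then 0 else ENNReal.ofReal (1/2) ^ d)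
            = ((n - 1 : ℕ) : ℝ≥0∞) * ENNReal.ofReal (1/2) ^ d := by
          intro i
          rw [Finset.sum_ite, Finset.sum_const, Finset.sum_const, smul_zero, zero_add]
          rw [Finset.filter_ne', Finset.card_erase_of_mem (Finset.mem_univ i),
            Finset.card_univ, Fintype.card_fin]
          exact nsmul_eq_mul _ _
        calc (∑ i : Fin n, ∑ j : Fin n, if j = i then 0 else ENNReal.ofReal (1/2) ^ d)
            = ∑ _i : Fin n, ((n - 1 : ℕ) : ℝ≥0∞) * ENNReal.ofReal (1/2) ^ d :=
              Finset.sum_congr rfl fun i _ => hinner i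
          _ = ((n : ℕ) : ℝ≥0∞) * (((n - 1 : ℕ) : ℝ≥0∞) * ENNReal.ofReal (1/2) ^ d) := by
              rw [Finset.sum_const, Finset.card_univ, Fintype.card_fin, nsmul_eq_mul]
          _ = ((n * (n - 1) : ℕ) : ℝ≥0∞) * ENNReal.ofReal (1/2) ^ d := by
              rw [Nat.cast_mul, mul_assoc]

lemma cast_nn (n : ℕ) : (n : ℝ) * ((n : ℝ) - 1) = ((n * (n - 1) : ℕ) : ℝ) := by
  cases n with
  | zero => simp
  | succ m => push_cast [Nat.succ_sub_one]; ring

lemma two_pow_neg (d : ℕ) : (2 : ℝ) ^ (-(d : ℝ)) = (1/2 : ℝ) ^ d := by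
  rw [Real.rpow_neg (by norm_num), Real.rpow_natCast, one_div, inv_pow]

lemma bound_nonneg (n d : ℕ) : 0 ≤ (n : ℝ) * ((n : ℝ) - 1) * (2:ℝ) ^ (-(d : ℝ)) := by
  rw [cast_nn, two_pow_neg]
  positivity

lemma bound_cast (n d : ℕ) :
    ((n * (n - 1) : ℕ) : ℝ≥0∞) * ENNReal.ofReal (1/2) ^ d
      = ENNReal.ofReal ((n : ℝ) * ((n : ℝ) - 1) * (2:ℝ) ^ (-(d : ℝ))) := by
  rw [show (n : ℝ) * ((n : ℝ) - 1) * (2:ℝ) ^ (-(d : ℝ))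
      = ((n * (n - 1) : ℕ) : ℝ) * (1/2 : ℝ) ^ d from by rw [cast_nn, two_pow_neg]]
  rw [ENNReal.ofReal_mul (by positivity), ENNReal.ofReal_natCast,
    ENNReal.ofReal_pow (by norm_num)]

lemma count_enn_meas {n d : ℕ} :
    Measurable (fun ω => ((nonParetoCount n d ω : ℕ) : ℝ≥0∞)) :=
  measurable_from_top.comp meas_count

lemma lintegral_enn_eq (n d : ℕ) :
    ∫⁻ ω, ENNReal.ofReal ((nonParetoCount n d ω : ℝ)) ∂ sample n d
      = ∫⁻ ω, ((nonParetoCount n d ω : ℕ) : ℝ≥0∞) ∂ sample n d := by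
  refine lintegral_congr fun ω => ?_
  rw [ENNReal.ofReal_natCast]

lemma part1 (n d : ℕ) :
    (∫ ω, (nonParetoCount n d ω : ℝ) ∂ sample n d)
      ≤ (n : ℝ) * ((n : ℝ) - 1) * (2:ℝ) ^ (-(d : ℝ)) := by
  have hmeas : AEStronglyMeasurable (fun ω => (nonParetoCount n d ω : ℝ)) (sample n d) :=
    (measurable_from_top.comp (meas_count (n := n) (d := d))).aestronglyMeasurable
  rw [integral_eq_lintegral_of_nonneg_ae (ae_of_all _ fun ω => by positivity) hmeas]
  refine ENNReal.toReal_le_of_le_ofReal (bound_nonneg n d) ?_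
  rw [lintegral_enn_eq]
  exact (lintegral_bound n d).trans_eq (bound_cast n d)

lemma part2 (d : ℕ → ℕ)
    (hd : Tendsto (fun n : ℕ => (d n : ℝ) - 2 / Real.log 2 * Real.log n) atTop atTop) :
    Tendsto (fun n : ℕ => (n : ℝ) * ((n : ℝ) - 1) * (2 : ℝ) ^ (-(d n : ℝ))) atTop (nhds 0) := by
  have h2 : (0:ℝ) < Real.log 2 := Real.log_pos (by norm_num)
  have hg : Tendsto (fun n : ℕ =>
      Real.exp (-Real.log 2 * ((d n : ℝ) - 2 / Real.log 2 * Real.log n))) atTop (nhds 0) := by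
    apply Real.tendsto_exp_atBot.comp
    exact (tendsto_const_mul_atBot_of_neg (by linarith)).2 hd
  refine tendsto_of_tendsto_of_tendsto_of_le_of_le' tendsto_const_nhds hg ?_ ?_
  · exact Eventually.of_forall fun n => bound_nonneg n (d n)
  · filter_upwards [eventually_ge_atTop 1] with n hn
    have hn1 : (1:ℝ) ≤ (n:ℝ) := by exact_mod_cast hn
    have key : Real.exp (-Real.log 2 * ((d n : ℝ) - 2 / Real.log 2 * Real.log n))
        = (n:ℝ) * (n:ℝ) * (2:ℝ) ^ (-(d n : ℝ)) := by
      have harg : -Real.log 2 * ((d n : ℝ) - 2 / Real.log 2 * Real.log n)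
          = (Real.log n + Real.log n) + (-(d n : ℝ)) * Real.log 2 := by
        field_simp
        ring
      rw [harg, Real.exp_add, Real.exp_add, Real.exp_log (by linarith)]
      congr 1
      rw [Real.rpow_def_of_pos (by norm_num : (0:ℝ) < 2)]
      ring_nf
    rw [key]
    have h2p : (0:ℝ) < (2:ℝ) ^ (-(d n : ℝ)) := Real.rpow_pos_of_pos (by norm_num) _
    have : (n:ℝ) - 1 ≤ (n:ℝ) := by linarith
    nlinarith

lemma part3 (d : ℕ → ℕ)
    (hd : Tendsto (fun n : ℕ => (d n : ℝ) - 2 / Real.log 2 * Real.log n) atTop atTop)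
    (ε : ℝ) (hε : 0 < ε) :
    Tendsto (fun n : ℕ => sample n (d n) {ω | ε ≤ (nonParetoCount n (d n) ω : ℝ)})
      atTop (nhds 0) := by
  have hne0 : ENNReal.ofReal ε ≠ 0 := (ENNReal.ofReal_pos.2 hε).ne'
  have hkey : ∀ n : ℕ, sample n (d n) {ω | ε ≤ (nonParetoCount n (d n) ω : ℝ)}
      ≤ (ENNReal.ofReal ε)⁻¹
        * ENNReal.ofReal ((n : ℝ) * ((n : ℝ) - 1) * (2:ℝ) ^ (-(d n : ℝ))) := by
    intro n
    have hset : {ω | ε ≤ ((nonParetoCount n (d n) ω : ℕ) : ℝ)}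
        = {ω | ENNReal.ofReal ε ≤ ((nonParetoCount n (d n) ω : ℕ) : ℝ≥0∞)} := by
      ext ω
      rw [Set.mem_setOf_eq, Set.mem_setOf_eq, ← ENNReal.ofReal_natCast,
        ENNReal.ofReal_le_ofReal_iff (by positivity)]
    have hm := mul_meas_ge_le_lintegral₀ (μ := sample n (d n))
      (count_enn_meas (n := n) (d := d n)).aemeasurable (ENNReal.ofReal ε)
    have hb := hm.trans ((lintegral_bound n (d n)).trans_eq (bound_cast n (d n)))
    calc sample n (d n) {ω | ε ≤ ((nonParetoCount n (d n) ω : ℕ) : ℝ)}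
        = (ENNReal.ofReal ε)⁻¹ * (ENNReal.ofReal ε
            * sample n (d n) {ω | ε ≤ ((nonParetoCount n (d n) ω : ℕ) : ℝ)}) := by
          rw [← mul_assoc, ENNReal.inv_mul_cancel hne0 ENNReal.ofReal_ne_top, one_mul]
      _ ≤ (ENNReal.ofReal ε)⁻¹
            * ENNReal.ofReal ((n : ℝ) * ((n : ℝ) - 1) * (2:ℝ) ^ (-(d n : ℝ))) := by
          refine mul_le_mul_right ?_ _
          rw [hset]
          exact hb
  have hlim : Tendsto (fun n : ℕ => (ENNReal.ofReal ε)⁻¹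
      * ENNReal.ofReal ((n : ℝ) * ((n : ℝ) - 1) * (2:ℝ) ^ (-(d n : ℝ)))) atTop (nhds 0) := by
    have h1 : Tendsto (fun n : ℕ =>
        ENNReal.ofReal ((n : ℝ) * ((n : ℝ) - 1) * (2:ℝ) ^ (-(d n : ℝ)))) atTop (nhds 0) := by
      have := ENNReal.tendsto_ofReal (part2 d hd)
      simpa using this
    have h2 := ENNReal.Tendsto.const_mul (a := (ENNReal.ofReal ε)⁻¹) h1
      (Or.inr (by simp [hne0]))
    simpa using h2
  exact tendsto_of_tendsto_of_tendsto_of_le_of_le' tendsto_const_nhds hlim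
    (Eventually.of_forall fun n => zero_le) (Eventually.of_forall hkey)

theorem nonPareto_supercritical (d : ℕ → ℕ)
    (hd : Tendsto (fun n : ℕ => (d n : ℝ) - 2 / Real.log 2 * Real.log n) atTop atTop) :
    (∀ n, (∫ ω, (nonParetoCount n (d n) ω : ℝ) ∂ sample n (d n))
        ≤ (n : ℝ) * ((n : ℝ) - 1) * (2 : ℝ) ^ (-(d n : ℝ))) ∧
    Tendsto (fun n : ℕ => (n : ℝ) * ((n : ℝ) - 1) * (2 : ℝ) ^ (-(d n : ℝ))) atTop (nhds 0) ∧
    (∀ ε > (0 : ℝ), Tendsto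
      (fun n : ℕ => sample n (d n) {ω | ε ≤ (nonParetoCount n (d n) ω : ℝ)}) atTop (nhds 0)) :=
  ⟨fun n => part1 n (d n), part2 d hd, fun ε hε => part3 d hd ε hε⟩
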